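/- Let σ(x) = e^{-x/2} on (0,∞) and let p_n denote the orthonormal Laguerre polynomials for the weight σ². For z = e^{iθ} with |θ| < π/2 and s_θ = cos θ, the quantity N_{n,z} = ∫_0^∞ |p_n(zx) σ(zx)|² |z| dx satisfies N_{n,z} ≤ s_θ^{-2n-1} · 2^(4n+2) for all n ≥ 0. -/

import Mathlib

open Real MeasureTheory

private lemma pow_div_fact_le_exp (t : ℝ) (ht : 0 ≤ t) (r : ℕ) :
    t ^ r / r.factorial ≤ Real.exp t := by
  calc t ^ r / r.factorial
      ≤ ∑ i ∈ Finset.range (r + 1), t ^ i / i.factorial := by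
        exact Finset.single_le_sum (f := fun i => t ^ i / i.factorial)
          (fun i _ => by positivity) (Finset.self_mem_range_succ r)
    _ ≤ Real.exp t := Real.sum_le_exp_of_nonneg ht _

/-- Upper bound on `N_{n,z}` for the rotated Laguerre weight `σ(x) = e^{-x/2}`. -/
theorem laguerre_upper_bound (θ : ℝ) (hθ : |θ| < π / 2) (n : ℕ) :
    (∫ x in Set.Ioi (0 : ℝ),
        ‖((∑ r ∈ Finset.range (n + 1),
                ((-1 : ℂ) ^ (n - r) * (Nat.factorial n) /
                    ((Nat.factorial r) ^ 2 * Nat.factorial (n - r)) *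
                  (Complex.exp (θ * Complex.I) * x) ^ r)) *
              Complex.exp (-(Complex.exp (θ * Complex.I) * x) / 2))‖ ^ 2 *
          ‖Complex.exp (θ * Complex.I)‖) ≤
      (Real.cos θ) ^ (-(2 * (n : ℤ) + 1)) * 2 ^ (4 * n + 2) := by
  obtain ⟨hθ1, hθ2⟩ := abs_lt.mp hθ
  set s := Real.cos θ with hs_def
  have hs : 0 < s := Real.cos_pos_of_mem_Ioo ⟨by linarith, hθ2⟩
  have hs1 : s ≤ 1 := Real.cos_le_one θ
  set z : ℂ := Complex.exp (θ * Complex.I) with hz_def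
  have hzre : z.re = s := by
    exact Complex.exp_ofReal_mul_I_re θ
  have hzabs : ‖z‖ = 1 := by
    rw [hz_def, Complex.norm_exp]
    simp
  set C : ℝ := (3 / s + 1) ^ (2 * n) with hC_def
  have hC : 0 ≤ C := by positivity
  set F : ℝ → ℝ := fun x =>
    ‖((∑ r ∈ Finset.range (n + 1),
            ((-1 : ℂ) ^ (n - r) * (Nat.factorial n) /
                ((Nat.factorial r) ^ 2 * Nat.factorial (n - r)) *
              (z * x) ^ r)) *
          Complex.exp (-(z * x) / 2))‖ ^ 2 * ‖z‖ with hF_def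
  have hFnonneg : ∀ x, 0 ≤ F x := fun x => by positivity
  set g : ℝ → ℝ := fun x => C * Real.exp (-(s / 3) * x) with hg_def
  -- pointwise bound
  have key : ∀ x ∈ Set.Ioi (0 : ℝ), F x ≤ g x := by
    intro x hx
    have hx0 : (0 : ℝ) < x := hx
    have hE : ‖Complex.exp (-(z * x) / 2)‖ = Real.exp (-(s * x) / 2) := by
      rw [Complex.norm_exp]
      congr 1
      simp [Complex.div_re, Complex.mul_re, hzre, Complex.normSq]
    have hP : ‖∑ r ∈ Finset.range (n + 1),
        ((-1 : ℂ) ^ (n - r) * (Nat.factorial n) /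
            ((Nat.factorial r) ^ 2 * Nat.factorial (n - r)) *
          (z * x) ^ r)‖ ≤ (3 / s + 1) ^ n * Real.exp (s / 3 * x) := by
      calc ‖∑ r ∈ Finset.range (n + 1),
            ((-1 : ℂ) ^ (n - r) * (Nat.factorial n) /
                ((Nat.factorial r) ^ 2 * Nat.factorial (n - r)) *
              (z * x) ^ r)‖
          ≤ ∑ r ∈ Finset.range (n + 1),
            ‖(-1 : ℂ) ^ (n - r) * (Nat.factorial n) /
                ((Nat.factorial r) ^ 2 * Nat.factorial (n - r)) *
              (z * x) ^ r‖ := by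
            exact norm_sum_le _ _
        _ ≤ ∑ r ∈ Finset.range (n + 1),
            (n.choose r : ℝ) * (3 / s) ^ r * Real.exp (s / 3 * x) := by
            apply Finset.sum_le_sum
            intro r hr
            have hrn : r ≤ n := Nat.lt_succ_iff.mp (Finset.mem_range.mp hr)
            have habs : ‖(-1 : ℂ) ^ (n - r) * (Nat.factorial n) /
                ((Nat.factorial r) ^ 2 * Nat.factorial (n - r)) * (z * x) ^ r‖
                = (n.factorial : ℝ) / ((r.factorial : ℝ) ^ 2 * (n - r).factorial) * x ^ r := by
              rw [norm_mul, norm_div, norm_mul, norm_mul, norm_pow, norm_pow, norm_pow]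
              simp [hzabs, abs_of_pos hx0]
            rw [habs]
            have hfact : (n.factorial : ℝ) / ((r.factorial : ℝ) ^ 2 * (n - r).factorial)
                = (n.choose r : ℝ) / r.factorial := by
              have h := Nat.choose_mul_factorial_mul_factorial hrn
              have h' : (n.choose r : ℝ) * r.factorial * (n - r).factorial = n.factorial := by
                exact_mod_cast congrArg (Nat.cast : ℕ → ℝ) h
              field_simp
              nlinarith [h', Nat.factorial_pos r, Nat.factorial_pos (n - r)]
            rw [hfact]
            have hxr : x ^ r / r.factorial ≤ (3 / s) ^ r * Real.exp (s / 3 * x) := by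
              have h1 : (s / 3 * x) ^ r / r.factorial ≤ Real.exp (s / 3 * x) :=
                pow_div_fact_le_exp _ (by positivity) r
              have h2 : x ^ r = (3 / s) ^ r * (s / 3 * x) ^ r := by
                rw [← mul_pow]
                congr 1
                field_simp
              rw [h2]
              calc (3 / s) ^ r * (s / 3 * x) ^ r / r.factorial
                  = (3 / s) ^ r * ((s / 3 * x) ^ r / r.factorial) := by ring
                _ ≤ (3 / s) ^ r * Real.exp (s / 3 * x) := by
                    apply mul_le_mul_of_nonneg_left h1 (by positivity)
            calc (n.choose r : ℝ) / r.factorial * x ^ r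
                = (n.choose r : ℝ) * (x ^ r / r.factorial) := by ring
              _ ≤ (n.choose r : ℝ) * ((3 / s) ^ r * Real.exp (s / 3 * x)) := by
                  apply mul_le_mul_of_nonneg_left hxr (by positivity)
              _ = (n.choose r : ℝ) * (3 / s) ^ r * Real.exp (s / 3 * x) := by ring
        _ = (3 / s + 1) ^ n * Real.exp (s / 3 * x) := by
            rw [← Finset.sum_mul]
            congr 1
            rw [add_pow]
            apply Finset.sum_congr rfl
            intro r hr
            ring
    have hFle : F x ≤ ((3 / s + 1) ^ n * Real.exp (s / 3 * x) * Real.exp (-(s * x) / 2)) ^ 2 := by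
      rw [hF_def]
      simp only [hzabs, mul_one, norm_mul]
      rw [hE]
      apply pow_le_pow_left₀ (by positivity)
      exact mul_le_mul_of_nonneg_right hP (Real.exp_nonneg _)
    calc F x ≤ ((3 / s + 1) ^ n * Real.exp (s / 3 * x) * Real.exp (-(s * x) / 2)) ^ 2 := hFle
      _ = g x := by
          show ((3 / s + 1) ^ n * Real.exp (s / 3 * x) * Real.exp (-(s * x) / 2)) ^ 2
              = C * Real.exp (-(s / 3) * x)
          rw [hC_def, mul_pow, mul_pow, ← Real.exp_nat_mul, ← Real.exp_nat_mul,
            mul_assoc, ← Real.exp_add, ← pow_mul]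
          congr 1
          · ring
          · push_cast; ring
  -- integrability of g
  have hgint : IntegrableOn g (Set.Ioi (0 : ℝ)) := by
    exact (exp_neg_integrableOn_Ioi 0 (by positivity : (0:ℝ) < s / 3)).const_mul C
  -- integral comparison
  have hmono : ∫ x in Set.Ioi (0 : ℝ), F x ≤ ∫ x in Set.Ioi (0 : ℝ), g x := by
    apply integral_mono_of_nonneg
    · exact ae_of_all _ hFnonneg
    · exact hgint
    · exact (ae_restrict_iff' measurableSet_Ioi).mpr (ae_of_all _ key)
  have hgval : ∫ x in Set.Ioi (0 : ℝ), g x = C * (3 / s) := by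
    rw [hg_def]
    rw [MeasureTheory.integral_const_mul]
    have : ∫ x in Set.Ioi (0 : ℝ), Real.exp (-(s / 3) * x)
        = (s / 3)⁻¹ • ∫ x in Set.Ioi ((s / 3) * 0), Real.exp (-x) := by
      rw [← integral_comp_mul_left_Ioi (fun u => Real.exp (-u)) 0 (by positivity : (0:ℝ) < s / 3)]
      simp [neg_mul]
    rw [this]
    rw [mul_zero, integral_exp_neg_Ioi]
    simp [smul_eq_mul]
    try ring
  have hfinal : C * (3 / s) ≤ s ^ (-(2 * (n : ℤ) + 1)) * 2 ^ (4 * n + 2) := by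
    have h4 : 3 / s + 1 ≤ 4 / s := by
      have h1s : (1 : ℝ) ≤ 1 / s := one_le_one_div hs hs1
      have heq : 3 / s + 1 / s = 4 / s := by ring
      linarith
    have hzpow : s ^ (-(2 * (n : ℤ) + 1)) = (s ^ (2 * n + 1))⁻¹ := by
      rw [show (-(2 * (n : ℤ) + 1)) = -((2 * n + 1 : ℕ) : ℤ) by push_cast; ring,
        zpow_neg, zpow_natCast]
    rw [hzpow]
    calc C * (3 / s) ≤ (4 / s) ^ (2 * n) * (4 / s) := by
          apply mul_le_mul
          · exact pow_le_pow_left₀ (by positivity) h4 _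
          · gcongr <;> norm_num
          · positivity
          · positivity
      _ = (4 / s) ^ (2 * n + 1) := by rw [pow_succ]
      _ = (s ^ (2 * n + 1))⁻¹ * 2 ^ (4 * n + 2) := by
          rw [div_pow]
          rw [show (4 : ℝ) ^ (2 * n + 1) = 2 ^ (4 * n + 2) by
            rw [show (4:ℝ) = 2 ^ 2 by norm_num, ← pow_mul]; ring_nf]
          ring
  calc (∫ x in Set.Ioi (0 : ℝ), F x) ≤ ∫ x in Set.Ioi (0 : ℝ), g x := hmono
    _ = C * (3 / s) := hgval
    _ ≤ s ^ (-(2 * (n : ℤ) + 1)) * 2 ^ (4 * n + 2) := hfinal
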